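/- Let 𝕂 be ℝ or ℂ, let 1 ≤ p, q, r < ∞, let n ≥ 1, and let E, F be Banach spaces over 𝕂. Let T : E^n → F be a symmetric continuous n-linear operator that is multiple (p;q,…,q;r)-summing, and let γ ∈ E*. Define the symmetric continuous (n+1)-linear operator S : E^{n+1} → F by S(x_1,…,x_{n+1}) = (1/(n+1)) ∑_{k=1}^{n+1} γ(x_k) · T(x_1,…,x_{k−1},x_{k+1},…,x_{n+1}). Then S is multiple (p;q,…,q;r)-summing and ‖S‖_{mas(p;q,…,q;r)} ≤ ‖γ‖ · ‖T‖_{mas(p;q,…,q;r)}. -/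

import Mathlib

open scoped BigOperators
noncomputable section

/-- The weak `ℓ^q` norm of a finite family in a normed space:
`sup_{‖φ‖ ≤ 1} (∑_j |φ(x_j)|^q)^{1/q}`. -/
def weakLpNorm (𝕂 : Type*) [RCLike 𝕂] {E : Type*} [NormedAddCommGroup E] [NormedSpace 𝕂 E]
    {J : Type*} [Fintype J] (q : ℝ) (x : J → E) : ℝ :=
  ⨆ φ : {φ : E →L[𝕂] 𝕂 // ‖φ‖ ≤ 1}, (∑ j, ‖φ.1 (x j)‖ ^ q) ^ (1 / q)

/-- `T` is multiple `(p;q₁,…,qₙ;r)`-summing. -/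
def MultipleSummingR (𝕂 : Type*) [RCLike 𝕂] {n : ℕ} {E : Fin n → Type*}
    [∀ i, NormedAddCommGroup (E i)] [∀ i, NormedSpace 𝕂 (E i)]
    {F : Type*} [NormedAddCommGroup F] [NormedSpace 𝕂 F]
    (p r : ℝ) (q : Fin n → ℝ) (T : ((i : Fin n) → E i) → F) : Prop :=
  ∃ C : ℝ, 0 ≤ C ∧ ∀ (m : ℕ) (x : (i : Fin n) → Fin m → E i)
      (φ : (Fin n → Fin m) → (F →L[𝕂] 𝕂)),
      (∑ j : Fin n → Fin m, ‖φ j (T (fun i => x i (j i)))‖ ^ p) ^ (1 / p) ≤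
        C * weakLpNorm 𝕂 r φ * ∏ i, weakLpNorm 𝕂 (q i) (x i)

/-- The multiple `(p;q₁,…,qₙ;r)`-summing norm of `T`: the infimum of the
admissible constants `C`. -/
def masNormR (𝕂 : Type*) [RCLike 𝕂] {n : ℕ} {E : Fin n → Type*}
    [∀ i, NormedAddCommGroup (E i)] [∀ i, NormedSpace 𝕂 (E i)]
    {F : Type*} [NormedAddCommGroup F] [NormedSpace 𝕂 F]
    (p r : ℝ) (q : Fin n → ℝ) (T : ((i : Fin n) → E i) → F) : ℝ :=
  sInf { C : ℝ | 0 ≤ C ∧ ∀ (m : ℕ) (x : (i : Fin n) → Fin m → E i)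
      (φ : (Fin n → Fin m) → (F →L[𝕂] 𝕂)),
      (∑ j : Fin n → Fin m, ‖φ j (T (fun i => x i (j i)))‖ ^ p) ^ (1 / p) ≤
        C * weakLpNorm 𝕂 r φ * ∏ i, weakLpNorm 𝕂 (q i) (x i) }

section helpers
variable {𝕂 : Type*} [RCLike 𝕂] {E : Type*} [NormedAddCommGroup E] [NormedSpace 𝕂 E]
  {J : Type*} [Fintype J] {q : ℝ}

lemma wlp_bddAbove (hq : 0 ≤ q) (x : J → E) :
    BddAbove (Set.range fun φ : {φ : E →L[𝕂] 𝕂 // ‖φ‖ ≤ 1} =>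
      (∑ j, ‖φ.1 (x j)‖ ^ q) ^ (1 / q)) := by
  refine ⟨(∑ j, ‖x j‖ ^ q) ^ (1 / q), ?_⟩
  rintro - ⟨φ, rfl⟩
  refine Real.rpow_le_rpow (Finset.sum_nonneg fun j _ => Real.rpow_nonneg (norm_nonneg _) _)
    (Finset.sum_le_sum fun j _ => Real.rpow_le_rpow (norm_nonneg _) ?_ hq)
    (by positivity)
  calc ‖φ.1 (x j)‖ ≤ ‖φ.1‖ * ‖x j‖ := φ.1.le_opNorm _
    _ ≤ 1 * ‖x j‖ := by gcongr; exact φ.2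
    _ = ‖x j‖ := one_mul _

lemma le_weakLpNorm (hq : 0 ≤ q) (x : J → E) (φ : E →L[𝕂] 𝕂) (hφ : ‖φ‖ ≤ 1) :
    (∑ j, ‖φ (x j)‖ ^ q) ^ (1 / q) ≤ weakLpNorm 𝕂 q x :=
  le_ciSup (wlp_bddAbove hq x) (⟨φ, hφ⟩ : {φ : E →L[𝕂] 𝕂 // ‖φ‖ ≤ 1})

lemma weakLpNorm_nonneg (q : ℝ) (x : J → E) : 0 ≤ weakLpNorm 𝕂 q x :=
  Real.iSup_nonneg fun φ => Real.rpow_nonneg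
    (Finset.sum_nonneg fun j _ => Real.rpow_nonneg (norm_nonneg _) _) _

lemma weakLpNorm_le {M : ℝ} (x : J → E)
    (h : ∀ φ : E →L[𝕂] 𝕂, ‖φ‖ ≤ 1 → (∑ j, ‖φ (x j)‖ ^ q) ^ (1 / q) ≤ M) :
    weakLpNorm 𝕂 q x ≤ M := by
  haveI : Nonempty {φ : E →L[𝕂] 𝕂 // ‖φ‖ ≤ 1} := ⟨⟨0, by simp⟩⟩
  exact ciSup_le fun φ => h φ.1 φ.2

lemma lp_triangle {ι κ : Type*} [Fintype ι] [DecidableEq κ] (s : Finset κ) {p : ℝ} (hp : 1 ≤ p)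
    (f : κ → ι → ℝ) (hf : ∀ k i, 0 ≤ f k i) :
    (∑ i, (∑ k ∈ s, f k i) ^ p) ^ (1 / p) ≤ ∑ k ∈ s, (∑ i, f k i ^ p) ^ (1 / p) := by
  have hp0 : p ≠ 0 := by linarith
  induction s using Finset.induction with
  | empty => simp [Real.zero_rpow hp0, Real.zero_rpow (inv_ne_zero hp0)]
  | @insert a s ha ih =>
    simp only [Finset.sum_insert ha]
    calc (∑ i, (f a i + ∑ k ∈ s, f k i) ^ p) ^ (1 / p)
        = (∑ i, |f a i + ∑ k ∈ s, f k i| ^ p) ^ (1 / p) := by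
          congr 1; refine Finset.sum_congr rfl fun i _ => ?_
          rw [abs_of_nonneg (add_nonneg (hf a i) (Finset.sum_nonneg fun k _ => hf k i))]
      _ ≤ (∑ i, |f a i| ^ p) ^ (1 / p) + (∑ i, |∑ k ∈ s, f k i| ^ p) ^ (1 / p) :=
          Real.Lp_add_le _ _ _ hp
      _ ≤ (∑ i, f a i ^ p) ^ (1 / p) + ∑ k ∈ s, (∑ i, f k i ^ p) ^ (1 / p) := by
          refine add_le_add (le_of_eq ?_) (le_trans (le_of_eq ?_) ih)
          · congr 1; exact Finset.sum_congr rfl fun i _ => by rw [abs_of_nonneg (hf a i)]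
          · congr 1; exact Finset.sum_congr rfl fun i _ => by
              rw [abs_of_nonneg (Finset.sum_nonneg fun k _ => hf k i)]

lemma sum_transfer {α β : Type*} [Fintype α] [Fintype β] (ι : α → β)
    (hinj : Function.Injective ι) (f : β → ℝ) (h0 : ∀ b, (∀ a, ι a ≠ b) → f b = 0) :
    ∑ b, f b = ∑ a, f (ι a) := by
  classical
  rw [← Finset.sum_image (f := f) (g := ι) (fun a _ b _ h => hinj h)]
  refine (Finset.sum_subset (Finset.subset_univ _) fun b _ hb => ?_).symm
  exact h0 b fun a ha => hb (Finset.mem_image.2 ⟨a, Finset.mem_univ _, ha⟩)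

end helpers

section helpers2
variable {𝕂 : Type*} [RCLike 𝕂] {E : Type*} [NormedAddCommGroup E] [NormedSpace 𝕂 E]
  {J : Type*} [Fintype J] {q : ℝ}

lemma sum_gamma_le (hq : 1 ≤ q) (γ : E →L[𝕂] 𝕂) (x : J → E) :
    ∑ j, ‖γ (x j)‖ ^ q ≤ (‖γ‖ * weakLpNorm 𝕂 q x) ^ q := by
  have hq0 : q ≠ 0 := by linarith
  by_cases hγ : γ = 0
  · simp [hγ, Real.zero_rpow hq0]
  · have hγ0 : (0:ℝ) < ‖γ‖ := norm_pos_iff.2 hγ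
    set u : E →L[𝕂] 𝕂 := ((‖γ‖⁻¹ : ℝ) : 𝕂) • γ with hu
    have hu1 : ‖u‖ ≤ 1 := by
      rw [hu, norm_smul ((‖γ‖⁻¹:ℝ):𝕂) γ, RCLike.norm_ofReal,
        abs_of_nonneg (inv_nonneg.2 (norm_nonneg _)), inv_mul_cancel₀ hγ0.ne']
    have h1 : ∑ j, ‖u (x j)‖ ^ q ≤ (weakLpNorm 𝕂 q x) ^ q := by
      have h2 := le_weakLpNorm (by linarith : (0:ℝ) ≤ q) x u hu1
      have h3 := Real.rpow_le_rpow (Real.rpow_nonneg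
        (Finset.sum_nonneg fun j _ => Real.rpow_nonneg (norm_nonneg _) _) _) h2 (by linarith : (0:ℝ) ≤ q)
      rwa [one_div, Real.rpow_inv_rpow
        (Finset.sum_nonneg fun j _ => Real.rpow_nonneg (norm_nonneg _) _) hq0] at h3
    have hux : ∀ j, ‖γ (x j)‖ = ‖γ‖ * ‖u (x j)‖ := by
      intro j
      rw [hu]
      simp only [ContinuousLinearMap.smul_apply, norm_smul ((‖γ‖⁻¹:ℝ):𝕂) (γ (x j)),
        RCLike.norm_ofReal, abs_of_nonneg (inv_nonneg.2 (norm_nonneg γ))]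
      field_simp
    calc ∑ j, ‖γ (x j)‖ ^ q = ∑ j, ‖γ‖ ^ q * ‖u (x j)‖ ^ q := by
          refine Finset.sum_congr rfl fun j _ => ?_
          rw [hux j, Real.mul_rpow (norm_nonneg _) (norm_nonneg _)]
      _ = ‖γ‖ ^ q * ∑ j, ‖u (x j)‖ ^ q := by rw [Finset.mul_sum]
      _ ≤ ‖γ‖ ^ q * (weakLpNorm 𝕂 q x) ^ q := by
          exact mul_le_mul_of_nonneg_left h1 (Real.rpow_nonneg (norm_nonneg _) _)
      _ = (‖γ‖ * weakLpNorm 𝕂 q x) ^ q := by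
          rw [← Real.mul_rpow (norm_nonneg _) (weakLpNorm_nonneg _ _)]

end helpers2

section key
variable {𝕂 : Type*} [RCLike 𝕂] {n : ℕ} {p q r : ℝ}
  {E F : Type*} [NormedAddCommGroup E] [NormedSpace 𝕂 E]
  [NormedAddCommGroup F] [NormedSpace 𝕂 F]

lemma key_k (hp : 1 ≤ p) (hq : 1 ≤ q) (hr : 1 ≤ r)
    (T : ContinuousMultilinearMap 𝕂 (fun _ : Fin (n + 1) => E) F)
    {C : ℝ} (hC0 : 0 ≤ C)
    (hC : ∀ (m : ℕ) (x : Fin (n+1) → Fin m → E) (φ : (Fin (n+1) → Fin m) → (F →L[𝕂] 𝕂)),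
      (∑ j : Fin (n+1) → Fin m, ‖φ j (T (fun i => x i (j i)))‖ ^ p) ^ (1 / p) ≤
        C * weakLpNorm 𝕂 r φ * ∏ i : Fin (n+1), weakLpNorm 𝕂 q (x i))
    (γ : E →L[𝕂] 𝕂) (k : Fin (n + 2)) (m : ℕ) (x : Fin (n + 2) → Fin m → E)
    (φ : (Fin (n + 2) → Fin m) → (F →L[𝕂] 𝕂)) :
    (∑ j : Fin (n + 2) → Fin m,
        ‖φ j (γ (x k (j k)) • T (k.removeNth (fun i => x i (j i))))‖ ^ p) ^ (1 / p) ≤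
      ‖γ‖ * C * weakLpNorm 𝕂 r φ * ∏ i, weakLpNorm 𝕂 q (x i) := by
  classical
  have hp0 : p ≠ 0 := by linarith
  have hq0 : q ≠ 0 := by linarith
  have hr0 : r ≠ 0 := by linarith
  have hRHS : 0 ≤ ‖γ‖ * C * weakLpNorm 𝕂 r φ * ∏ i, weakLpNorm 𝕂 q (x i) :=
    mul_nonneg (mul_nonneg (mul_nonneg (norm_nonneg _) hC0) (weakLpNorm_nonneg _ _))
      (Finset.prod_nonneg fun i _ => weakLpNorm_nonneg _ _)
  rcases m with _ | M
  · haveI : IsEmpty (Fin (n + 2) → Fin 0) := ⟨fun j => (j k).elim0⟩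
    rw [Finset.univ_eq_empty, Finset.sum_empty, Real.zero_rpow (one_div_ne_zero hp0)]
    exact hRHS
  -- main case
  set e : Fin ((M+1) * (M+1)) ≃ Fin (M+1) × Fin (M+1) := finProdFinEquiv.symm with he
  set y : Fin (n+1) → Fin ((M+1) * (M+1)) → E := fun i c =>
    if i = 0 then γ (x k (e c).1) • x (k.succAbove i) (e c).2
    else if (e c).1 = 0 then x (k.succAbove i) (e c).2 else 0 with hy
  set ψ : (Fin (n+1) → Fin ((M+1) * (M+1))) → (F →L[𝕂] 𝕂) := fun J =>
    if (∀ i, i ≠ 0 → (e (J i)).1 = 0)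
    then φ (k.insertNth (e (J 0)).1 (fun i => (e (J i)).2)) else 0 with hψ
  set ι : (Fin (n + 2) → Fin (M+1)) → (Fin (n+1) → Fin ((M+1) * (M+1))) := fun j i =>
    e.symm (if i = 0 then j k else 0, j (k.succAbove i)) with hι
  have heι : ∀ j i, e (ι j i) = (if i = 0 then j k else 0, j (k.succAbove i)) := by
    intro j i; rw [hι]; exact e.apply_symm_apply _
  have hinj : Function.Injective ι := by
    intro j j' h
    funext a
    rcases eq_or_ne a k with rfl | hak
    · have h2 := congrArg Prod.fst ((heι j 0).symm.trans (by rw [congrFun h 0, heι]))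
      simpa using h2
    · obtain ⟨i, hi⟩ := Fin.exists_succAbove_eq hak
      have h2 := congrArg Prod.snd ((heι j i).symm.trans (by rw [congrFun h i, heι]))
      simpa [hi] using h2
  have hψι : ∀ j, ψ (ι j) = φ j := by
    intro j
    have hcond : ∀ i : Fin (n+1), i ≠ 0 → (e (ι j i)).1 = 0 := by
      intro i hi; rw [heι]; simp [hi]
    rw [hψ]
    simp only [if_pos hcond]
    have h1 : (e (ι j 0)).1 = j k := by rw [heι]; simp
    have h2 : (fun i => (e (ι j i)).2) = fun i => j (k.succAbove i) := by
      funext i; rw [heι]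
    rw [h1, h2]
    exact congrArg φ (Fin.insertNth_self_removeNth k j)
  have hsurj : ∀ J, (∀ i : Fin (n+1), i ≠ 0 → (e (J i)).1 = 0) →
      ι (k.insertNth (e (J 0)).1 (fun i => (e (J i)).2)) = J := by
    intro J hJ
    funext i
    rw [hι]
    simp only
    rw [Equiv.symm_apply_eq]
    refine Prod.ext ?_ ?_
    · by_cases hi : i = 0
      · subst hi; simp [Fin.insertNth_apply_same]
      · simp [hi, (hJ i hi).symm]
    · simp [Fin.insertNth_apply_succAbove]
  -- transfer of the main sum
  have hsum1 : ∑ J : Fin (n+1) → Fin ((M+1) * (M+1)), ‖ψ J (T (fun i => y i (J i)))‖ ^ p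
      = ∑ j : Fin (n + 2) → Fin (M+1),
        ‖φ j (γ (x k (j k)) • T (k.removeNth (fun i => x i (j i))))‖ ^ p := by
    rw [sum_transfer ι hinj (fun J => ‖ψ J (T (fun i => y i (J i)))‖ ^ p) ?_]
    · refine Finset.sum_congr rfl fun j _ => ?_
      have harg : (fun i => y i (ι j i)) =
          Function.update (fun i => x (k.succAbove i) (j (k.succAbove i))) 0
            (γ (x k (j k)) • x (k.succAbove 0) (j (k.succAbove 0))) := by
        funext i
        rw [Function.update_apply]
        by_cases hi : i = 0
        · subst hi; rw [hy]; simp only [if_pos rfl, heι]; simp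
        · rw [hy]; simp only [if_neg hi, heι, if_pos rfl]; simp [hi]
      have hT2 : T (fun i => y i (ι j i)) =
          γ (x k (j k)) • T (k.removeNth (fun i => x i (j i))) := by
        rw [harg]
        have := T.map_update_smul (fun i => x (k.succAbove i) (j (k.succAbove i))) 0
          (γ (x k (j k))) (x (k.succAbove 0) (j (k.succAbove 0)))
        rw [this, Function.update_eq_self]
        rfl
      rw [hψι j, hT2]
    · intro J hJ
      by_cases hcond : ∀ i : Fin (n+1), i ≠ 0 → (e (J i)).1 = 0
      · exact absurd (hsurj J hcond) (hJ _)
      · rw [hψ]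
        simp only [if_neg hcond, ContinuousLinearMap.zero_apply, norm_zero,
          Real.zero_rpow hp0]
  -- weak norm of the functionals
  have hψw : weakLpNorm 𝕂 r ψ ≤ weakLpNorm 𝕂 r φ := by
    refine weakLpNorm_le _ fun Φ hΦ => ?_
    have hsum2 : ∑ J, ‖Φ (ψ J)‖ ^ r = ∑ j, ‖Φ (φ j)‖ ^ r := by
      rw [sum_transfer ι hinj (fun J => ‖Φ (ψ J)‖ ^ r) ?_]
      · exact Finset.sum_congr rfl fun j _ => by rw [hψι j]
      · intro J hJ
        by_cases hcond : ∀ i : Fin (n+1), i ≠ 0 → (e (J i)).1 = 0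
        · exact absurd (hsurj J hcond) (hJ _)
        · rw [hψ]
          simp only [if_neg hcond, map_zero, norm_zero, Real.zero_rpow hr0]
    rw [hsum2]
    exact le_weakLpNorm (by linarith) φ Φ hΦ
  -- weak norms of the modified vectors
  have hy0w : weakLpNorm 𝕂 q (y 0) ≤
      ‖γ‖ * weakLpNorm 𝕂 q (x k) * weakLpNorm 𝕂 q (x (k.succAbove 0)) := by
    refine weakLpNorm_le _ fun Φ hΦ => ?_
    have hsum3 : ∑ c, ‖Φ (y 0 c)‖ ^ q =
        (∑ a, ‖γ (x k a)‖ ^ q) * ∑ b, ‖Φ (x (k.succAbove 0) b)‖ ^ q := by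
      rw [← Equiv.sum_comp e.symm (fun c => ‖Φ (y 0 c)‖ ^ q), Fintype.sum_prod_type,
        Finset.sum_mul_sum]
      refine Finset.sum_congr rfl fun a _ => Finset.sum_congr rfl fun b _ => ?_
      rw [hy]
      simp only [Equiv.apply_symm_apply, eq_self_iff_true, if_true, if_pos rfl, map_smul,
        norm_smul]
      rw [Real.mul_rpow (norm_nonneg _) (norm_nonneg _)]
    rw [hsum3]
    have h1 := sum_gamma_le hq γ (x k)
    have h2 : ∑ b, ‖Φ (x (k.succAbove 0) b)‖ ^ q ≤ (weakLpNorm 𝕂 q (x (k.succAbove 0))) ^ q := by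
      have h3 := le_weakLpNorm (by linarith : (0:ℝ) ≤ q) (x (k.succAbove 0)) Φ hΦ
      have h4 := Real.rpow_le_rpow (Real.rpow_nonneg
        (Finset.sum_nonneg fun b _ => Real.rpow_nonneg (norm_nonneg _) _) _) h3 (by linarith : (0:ℝ) ≤ q)
      rwa [one_div, Real.rpow_inv_rpow
        (Finset.sum_nonneg fun b _ => Real.rpow_nonneg (norm_nonneg _) _) hq0] at h4
    calc ((∑ a, ‖γ (x k a)‖ ^ q) * ∑ b, ‖Φ (x (k.succAbove 0) b)‖ ^ q) ^ (1/q)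
        ≤ ((‖γ‖ * weakLpNorm 𝕂 q (x k)) ^ q * (weakLpNorm 𝕂 q (x (k.succAbove 0))) ^ q) ^ (1/q) := by
          refine Real.rpow_le_rpow ?_ (mul_le_mul h1 h2 ?_ (Real.rpow_nonneg ?_ _)) ?_
          · exact mul_nonneg (Finset.sum_nonneg fun a _ => Real.rpow_nonneg (norm_nonneg _) _)
              (Finset.sum_nonneg fun b _ => Real.rpow_nonneg (norm_nonneg _) _)
          · exact Finset.sum_nonneg fun b _ => Real.rpow_nonneg (norm_nonneg _) _
          · exact mul_nonneg (norm_nonneg _) (weakLpNorm_nonneg _ _)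
          · positivity
      _ = ‖γ‖ * weakLpNorm 𝕂 q (x k) * weakLpNorm 𝕂 q (x (k.succAbove 0)) := by
          rw [← Real.mul_rpow (mul_nonneg (norm_nonneg _) (weakLpNorm_nonneg _ _))
            (weakLpNorm_nonneg _ _), one_div, Real.rpow_rpow_inv ?_ hq0]
          exact mul_nonneg (mul_nonneg (norm_nonneg _) (weakLpNorm_nonneg _ _))
            (weakLpNorm_nonneg _ _)
  have hyiw : ∀ i : Fin (n+1), i ≠ 0 →
      weakLpNorm 𝕂 q (y i) ≤ weakLpNorm 𝕂 q (x (k.succAbove i)) := by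
    intro i hi
    refine weakLpNorm_le _ fun Φ hΦ => ?_
    have hsum4 : ∑ c, ‖Φ (y i c)‖ ^ q = ∑ b, ‖Φ (x (k.succAbove i) b)‖ ^ q := by
      rw [← Equiv.sum_comp e.symm (fun c => ‖Φ (y i c)‖ ^ q), Fintype.sum_prod_type]
      calc ∑ a, ∑ b, ‖Φ (y i (e.symm (a, b)))‖ ^ q
          = ∑ a : Fin (M+1), ∑ b, if a = 0 then ‖Φ (x (k.succAbove i) b)‖ ^ q else 0 := by
            refine Finset.sum_congr rfl fun a _ => Finset.sum_congr rfl fun b _ => ?_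
            rw [hy]
            by_cases ha : a = 0 <;>
              simp [hi, ha, Equiv.apply_symm_apply, Real.zero_rpow hq0]
        _ = ∑ b, ‖Φ (x (k.succAbove i) b)‖ ^ q := by
            rw [Finset.sum_comm]
            simp
    rw [hsum4]
    exact le_weakLpNorm (by linarith) _ Φ hΦ
  -- product bound
  have hprod : ∏ i : Fin (n+1), weakLpNorm 𝕂 q (y i) ≤
      ‖γ‖ * ∏ i : Fin (n+2), weakLpNorm 𝕂 q (x i) := by
    set B : Fin (n+1) → ℝ := fun i =>
      if i = 0 then ‖γ‖ * weakLpNorm 𝕂 q (x k) * weakLpNorm 𝕂 q (x (k.succAbove 0))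
      else weakLpNorm 𝕂 q (x (k.succAbove i)) with hB
    have h1 : ∏ i : Fin (n+1), weakLpNorm 𝕂 q (y i) ≤ ∏ i : Fin (n+1), B i := by
      refine Finset.prod_le_prod (fun i _ => weakLpNorm_nonneg _ _) fun i _ => ?_
      rw [hB]
      by_cases hi : i = 0
      · subst hi; simpa using hy0w
      · simpa [hi] using hyiw i hi
    refine h1.trans (le_of_eq ?_)
    rw [Fin.prod_univ_succ B, hB]
    simp only [if_pos rfl, Fin.succ_ne_zero, if_neg (Fin.succ_ne_zero _), if_true, if_false, eq_self_iff_true]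
    rw [Fin.prod_univ_succAbove (fun i => weakLpNorm 𝕂 q (x i)) k,
      Fin.prod_univ_succ (fun i => weakLpNorm 𝕂 q (x (k.succAbove i)))]
    ring
  -- conclude
  calc (∑ j : Fin (n + 2) → Fin (M+1),
        ‖φ j (γ (x k (j k)) • T (k.removeNth (fun i => x i (j i))))‖ ^ p) ^ (1 / p)
      = (∑ J : Fin (n+1) → Fin ((M+1) * (M+1)),
          ‖ψ J (T (fun i => y i (J i)))‖ ^ p) ^ (1 / p) := by rw [hsum1]
    _ ≤ C * weakLpNorm 𝕂 r ψ * ∏ i : Fin (n+1), weakLpNorm 𝕂 q (y i) := hC _ y ψ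
    _ ≤ C * weakLpNorm 𝕂 r φ * (‖γ‖ * ∏ i : Fin (n+2), weakLpNorm 𝕂 q (x i)) := by
        refine mul_le_mul (mul_le_mul_of_nonneg_left hψw hC0) hprod
          (Finset.prod_nonneg fun i _ => weakLpNorm_nonneg _ _)
          (mul_nonneg hC0 (weakLpNorm_nonneg _ _))
    _ = ‖γ‖ * C * weakLpNorm 𝕂 r φ * ∏ i, weakLpNorm 𝕂 q (x i) := by ring


lemma key_S (hp : 1 ≤ p) (hq : 1 ≤ q) (hr : 1 ≤ r)
    (T : ContinuousMultilinearMap 𝕂 (fun _ : Fin (n + 1) => E) F)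
    {C : ℝ} (hC0 : 0 ≤ C)
    (hC : ∀ (m : ℕ) (x : Fin (n+1) → Fin m → E) (φ : (Fin (n+1) → Fin m) → (F →L[𝕂] 𝕂)),
      (∑ j : Fin (n+1) → Fin m, ‖φ j (T (fun i => x i (j i)))‖ ^ p) ^ (1 / p) ≤
        C * weakLpNorm 𝕂 r φ * ∏ i : Fin (n+1), weakLpNorm 𝕂 q (x i))
    (γ : E →L[𝕂] 𝕂) (m : ℕ) (x : Fin (n + 2) → Fin m → E)
    (φ : (Fin (n + 2) → Fin m) → (F →L[𝕂] 𝕂)) :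
    (∑ j : Fin (n + 2) → Fin m,
        ‖φ j (((n + 2 : 𝕂))⁻¹ • ∑ k : Fin (n + 2),
          γ (x k (j k)) • T (k.removeNth (fun i => x i (j i))))‖ ^ p) ^ (1 / p) ≤
      ‖γ‖ * C * weakLpNorm 𝕂 r φ * ∏ i, weakLpNorm 𝕂 q (x i) := by
  have hp0 : p ≠ 0 := by linarith
  have hp0' : (0:ℝ) ≤ p := by linarith
  have h1p : (0:ℝ) ≤ 1 / p := by positivity
  have hn2 : ((n:ℝ) + 2) ≠ 0 := by positivity
  set c : 𝕂 := (n + 2 : 𝕂) with hc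
  have hcnorm : ‖c⁻¹‖ = ((n:ℝ) + 2)⁻¹ := by
    rw [hc, norm_inv]
    congr 1
    have h2 : ((n:𝕂) + 2) = ((n + 2 : ℕ) : 𝕂) := by push_cast; ring
    rw [h2, RCLike.norm_natCast]
    push_cast; ring
  set v : Fin (n + 2) → (Fin (n + 2) → Fin m) → F := fun k j =>
    γ (x k (j k)) • T (k.removeNth (fun i => x i (j i))) with hv
  set u : Fin (n + 2) → (Fin (n + 2) → Fin m) → ℝ := fun k j =>
    ‖c⁻¹‖ * ‖φ j (v k j)‖ with hu
  have hu0 : ∀ k j, 0 ≤ u k j := fun k j =>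
    mul_nonneg (norm_nonneg _) (norm_nonneg _)
  have stepA : ∀ j, ‖φ j (c⁻¹ • ∑ k : Fin (n + 2), v k j)‖ ≤ ∑ k : Fin (n + 2), u k j := by
    intro j
    rw [map_smul, norm_smul]
    calc ‖c⁻¹‖ * ‖φ j (∑ k : Fin (n + 2), v k j)‖
        ≤ ‖c⁻¹‖ * ∑ k : Fin (n + 2), ‖φ j (v k j)‖ := by
          refine mul_le_mul_of_nonneg_left ?_ (norm_nonneg _)
          rw [map_sum]
          exact norm_sum_le _ _
      _ = ∑ k : Fin (n + 2), u k j := by rw [Finset.mul_sum]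
  calc (∑ j : Fin (n + 2) → Fin m, ‖φ j (c⁻¹ • ∑ k : Fin (n + 2), v k j)‖ ^ p) ^ (1 / p)
      ≤ (∑ j : Fin (n + 2) → Fin m, (∑ k : Fin (n + 2), u k j) ^ p) ^ (1 / p) := by
        refine Real.rpow_le_rpow (Finset.sum_nonneg fun j _ => Real.rpow_nonneg (norm_nonneg _) _)
          (Finset.sum_le_sum fun j _ => Real.rpow_le_rpow (norm_nonneg _) (stepA j) hp0') h1p
    _ ≤ ∑ k : Fin (n + 2), (∑ j : Fin (n + 2) → Fin m, u k j ^ p) ^ (1 / p) :=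
        lp_triangle Finset.univ hp u hu0
    _ ≤ ∑ k : Fin (n + 2), ((n:ℝ) + 2)⁻¹ *
          (‖γ‖ * C * weakLpNorm 𝕂 r φ * ∏ i, weakLpNorm 𝕂 q (x i)) := by
        refine Finset.sum_le_sum fun k _ => ?_
        have hD : (∑ j : Fin (n + 2) → Fin m, u k j ^ p) ^ (1 / p) =
            ‖c⁻¹‖ * (∑ j : Fin (n + 2) → Fin m, ‖φ j (v k j)‖ ^ p) ^ (1 / p) := by
          have h3 : ∀ j : Fin (n + 2) → Fin m,
              u k j ^ p = ‖c⁻¹‖ ^ p * ‖φ j (v k j)‖ ^ p := fun j => by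
            rw [hu]; exact Real.mul_rpow (norm_nonneg _) (norm_nonneg _)
          simp_rw [h3]
          rw [← Finset.mul_sum, Real.mul_rpow (Real.rpow_nonneg (norm_nonneg _) _)
            (Finset.sum_nonneg fun j _ => Real.rpow_nonneg (norm_nonneg _) _),
            one_div, Real.rpow_rpow_inv (norm_nonneg _) hp0]
        rw [hD, hcnorm]
        refine mul_le_mul_of_nonneg_left ?_ (by positivity)
        exact key_k hp hq hr T hC0 hC γ k m x φ
    _ = ‖γ‖ * C * weakLpNorm 𝕂 r φ * ∏ i, weakLpNorm 𝕂 q (x i) := by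
        rw [Finset.sum_const, Finset.card_univ, Fintype.card_fin, nsmul_eq_mul]
        push_cast
        field_simp

end key


/-- if `T : E^{n+1} → F` is a symmetric continuous `(n+1)`-linear operator
which is multiple `(p;q,…,q;r)`-summing and `γ ∈ E*`, then the symmetric `(n+2)`-linear
operator `S(x) = (1/(n+2)) ∑ₖ γ(xₖ) T(x₁,…,x̂ₖ,…,x_{n+2})` (the symmetric multilinear
operator associated to `γ·P`) is multiple `(p;q,…,q;r)`-summing with
`‖S‖ ≤ ‖γ‖ ‖T‖`.  (Here the arity of `T` is `n + 1 ≥ 1`.) -/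
theorem multipleSummingR_gamma_mul
    {𝕂 : Type*} [RCLike 𝕂] {n : ℕ}
    (p q r : ℝ) (hp : 1 ≤ p) (hq : 1 ≤ q) (hr : 1 ≤ r)
    (E : Type*) [NormedAddCommGroup E] [NormedSpace 𝕂 E] [CompleteSpace E]
    (F : Type*) [NormedAddCommGroup F] [NormedSpace 𝕂 F] [CompleteSpace F]
    (T : ContinuousMultilinearMap 𝕂 (fun _ : Fin (n + 1) => E) F)
    (hsymm : ∀ (x : Fin (n + 1) → E) (σ : Equiv.Perm (Fin (n + 1))),
      T (fun i => x (σ i)) = T x)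
    (hT : MultipleSummingR 𝕂 p r (fun _ : Fin (n + 1) => q) (⇑T))
    (γ : E →L[𝕂] 𝕂) :
    MultipleSummingR 𝕂 p r (fun _ : Fin (n + 2) => q)
        (fun x : Fin (n + 2) → E =>
          ((n + 2 : 𝕂))⁻¹ • ∑ k : Fin (n + 2), γ (x k) • T (k.removeNth x)) ∧
      masNormR 𝕂 p r (fun _ : Fin (n + 2) => q)
          (fun x : Fin (n + 2) → E =>
            ((n + 2 : 𝕂))⁻¹ • ∑ k : Fin (n + 2), γ (x k) • T (k.removeNth x)) ≤
        ‖γ‖ * masNormR 𝕂 p r (fun _ : Fin (n + 1) => q) (⇑T) := by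
  obtain ⟨C, hC0, hC⟩ := hT
  constructor
  · exact ⟨‖γ‖ * C, mul_nonneg (norm_nonneg _) hC0,
      fun m x φ => key_S hp hq hr T hC0 hC γ m x φ⟩
  · rw [masNormR, masNormR]
    set A := { C : ℝ | 0 ≤ C ∧ ∀ (m : ℕ) (x : Fin (n+1) → Fin m → E)
      (φ : (Fin (n+1) → Fin m) → (F →L[𝕂] 𝕂)),
      (∑ j : Fin (n+1) → Fin m, ‖φ j (T (fun i => x i (j i)))‖ ^ p) ^ (1 / p) ≤
        C * weakLpNorm 𝕂 r φ * ∏ i : Fin (n+1), weakLpNorm 𝕂 q (x i) } with hA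
    set B := { C : ℝ | 0 ≤ C ∧ ∀ (m : ℕ) (x : Fin (n+2) → Fin m → E)
      (φ : (Fin (n+2) → Fin m) → (F →L[𝕂] 𝕂)),
      (∑ j : Fin (n+2) → Fin m,
        ‖φ j (((n + 2 : 𝕂))⁻¹ • ∑ k : Fin (n + 2),
          γ (x k (j k)) • T (k.removeNth (fun i => x i (j i))))‖ ^ p) ^ (1 / p) ≤
        C * weakLpNorm 𝕂 r φ * ∏ i : Fin (n+2), weakLpNorm 𝕂 q (x i) } with hB
    have hAne : A.Nonempty := ⟨C, hC0, hC⟩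
    have hBbdd : BddBelow B := ⟨0, fun C' hC' => hC'.1⟩
    have hmem : ∀ C' ∈ A, ‖γ‖ * C' ∈ B := fun C' hC' =>
      ⟨mul_nonneg (norm_nonneg _) hC'.1,
        fun m x φ => key_S hp hq hr T hC'.1 hC'.2 γ m x φ⟩
    have hle : ∀ C' ∈ A, sInf B ≤ ‖γ‖ * C' := fun C' h => csInf_le hBbdd (hmem C' h)
    rcases eq_or_lt_of_le (norm_nonneg γ) with hγ | hγ
    · have h1 : sInf B ≤ 0 := by
        have := hle C ⟨hC0, hC⟩
        rwa [← hγ, zero_mul] at this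
      calc sInf B ≤ 0 := h1
        _ = ‖γ‖ * sInf A := by rw [← hγ, zero_mul]
    · have h3 : ‖γ‖⁻¹ * sInf B ≤ sInf A :=
        le_csInf hAne fun b hb => (inv_mul_le_iff₀ hγ).2 (hle b hb)
      exact (inv_mul_le_iff₀ hγ).1 h3
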